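/- Let z_n := (6n−1)!!/(6^{2n}(2n)!), the n-th coefficient of the partition function of zero-dimensional φ³-theory. Then for every R ∈ ℕ, z_n − (1/(2π)) · Σ_{k=0}^{R−1} (−1)^k z_k (3/2)^{n−k} Γ(n−k) = O( (3/2)ⁿ Γ(n−R) ) as n → ∞. In other words, the complete asymptotic expansion of z_n is given by the same sequence with alternating signs (the self-replicating, resurgent phenomenon). -/

import Mathlib

open MeasureTheory Set Real Filter Finset

set_option maxHeartbeats 1000000

lemma realBetaIntegrable {p q : ℝ} (hp : 0 < p) (hq : 0 < q) :
    IntervalIntegrable (fun x : ℝ => x ^ (p-1) * (1-x) ^ (q-1)) volume 0 1 := by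
  have h := (Complex.betaIntegral_convergent (u := p) (v := q) (by simpa) (by simpa)).norm
  apply h.congr
  intro x hx
  rw [Set.uIoc_of_le (by norm_num : (0:ℝ) ≤ 1)] at hx
  have hx0 : (0:ℝ) ≤ x := le_of_lt hx.1
  have hx1 : (0:ℝ) ≤ 1 - x := by linarith [hx.2]
  simp only [norm_mul]
  rw [show ((p:ℂ) - 1) = ((p - 1 : ℝ) : ℂ) by push_cast; ring,
      show ((q:ℂ) - 1) = ((q - 1 : ℝ) : ℂ) by push_cast; ring,
      show (1 - (x:ℂ)) = ((1 - x : ℝ) : ℂ) by push_cast; ring]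
  rw [← Complex.ofReal_cpow hx0, ← Complex.ofReal_cpow hx1]
  rw [Complex.norm_real, Complex.norm_real, Real.norm_eq_abs, Real.norm_eq_abs,
      abs_of_nonneg (Real.rpow_nonneg hx0 _), abs_of_nonneg (Real.rpow_nonneg hx1 _)]

lemma realBeta {p q : ℝ} (hp : 0 < p) (hq : 0 < q) :
    ∫ x in (0:ℝ)..1, x ^ (p-1) * (1-x) ^ (q-1)
      = Real.Gamma p * Real.Gamma q / Real.Gamma (p+q) := by
  have hc : Complex.betaIntegral p q
      = ((∫ x in (0:ℝ)..1, x ^ (p-1) * (1-x) ^ (q-1) : ℝ) : ℂ) := by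
    rw [Complex.betaIntegral, ← intervalIntegral.integral_ofReal]
    apply intervalIntegral.integral_congr
    intro x hx
    rw [Set.uIcc_of_le (by norm_num : (0:ℝ) ≤ 1)] at hx
    have hx0 : (0:ℝ) ≤ x := hx.1
    have hx1 : (0:ℝ) ≤ 1 - x := by linarith [hx.2]
    beta_reduce
    rw [show ((p:ℂ) - 1) = ((p - 1 : ℝ) : ℂ) by push_cast; ring,
        show ((q:ℂ) - 1) = ((q - 1 : ℝ) : ℂ) by push_cast; ring,
        show (1 - (x:ℂ)) = ((1 - x : ℝ) : ℂ) by push_cast; ring]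
    rw [← Complex.ofReal_cpow hx0, ← Complex.ofReal_cpow hx1]
    push_cast
    ring
  have h := Complex.Gamma_mul_Gamma_eq_betaIntegral (s := p) (t := q) (by simpa) (by simpa)
  rw [hc] at h
  rw [← Complex.ofReal_add, Complex.Gamma_ofReal, Complex.Gamma_ofReal, Complex.Gamma_ofReal] at h
  have h2 : Real.Gamma p * Real.Gamma q = Real.Gamma (p+q) * ∫ x in (0:ℝ)..1, x ^ (p-1) * (1-x) ^ (q-1) := by
    exact_mod_cast h
  have hne : Real.Gamma (p+q) ≠ 0 := (Real.Gamma_pos_of_pos (by linarith)).ne'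
  rw [h2]
  field_simp


/-- rising factorial -/
noncomputable def poch (a : ℝ) (k : ℕ) : ℝ := ∏ i ∈ Finset.range k, (a + i)

lemma poch_zero (a : ℝ) : poch a 0 = 1 := by simp [poch]

lemma poch_succ (a : ℝ) (k : ℕ) : poch a (k+1) = poch a k * (a + k) := by
  simp [poch, Finset.prod_range_succ]

lemma poch_succ' (a : ℝ) (k : ℕ) : poch a (k+1) = a * poch (a+1) k := by
  rw [poch, poch, Finset.prod_range_succ']
  simp only [Nat.cast_zero, add_zero]
  rw [mul_comm]
  congr 1
  apply Finset.prod_congr rfl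
  intro i _
  push_cast; ring

lemma poch_nonneg {a : ℝ} (ha : 0 ≤ a) (k : ℕ) : 0 ≤ poch a k := by
  apply Finset.prod_nonneg; intro i _; positivity

/-- truncated binomial series for (1+v)^(-a) -/
noncomputable def Sb (a : ℝ) (R : ℕ) (v : ℝ) : ℝ :=
  ∑ k ∈ Finset.range R, (-1)^k * poch a k / k.factorial * v^k

lemma hasDerivAt_Sb (a : ℝ) (R : ℕ) (t : ℝ) :
    HasDerivAt (fun v => Sb a (R+1) v) (-a * Sb (a+1) R t) t := by
  have h : HasDerivAt (fun v => Sb a (R+1) v)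
      (∑ k ∈ Finset.range (R+1), (-1)^k * poch a k / k.factorial * (k * t^(k-1))) t := by
    apply HasDerivAt.fun_sum
    intro k _
    exact (hasDerivAt_pow k t).const_mul _
  convert h using 1
  rw [Finset.sum_range_succ']
  simp only [Nat.cast_zero, pow_zero, zero_mul, mul_zero, add_zero]
  rw [Sb, Finset.mul_sum]
  apply Finset.sum_congr rfl
  intro i _
  rw [Nat.add_sub_cancel, poch_succ', Nat.factorial_succ]
  have h1 : ((i:ℝ)+1) ≠ 0 := by positivity
  have h2 : ((i.factorial : ℕ) : ℝ) ≠ 0 := by positivity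
  push_cast
  field_simp
  ring

lemma series_bound (R : ℕ) : ∀ (a : ℝ), 0 ≤ a → ∀ v : ℝ, 0 ≤ v →
    |(1+v) ^ (-a) - Sb a R v| ≤ poch a R / R.factorial * v ^ R := by
  induction R with
  | zero =>
    intro a ha v hv
    simp only [Sb, Finset.range_zero, Finset.sum_empty, sub_zero, poch_zero, Nat.factorial_zero,
      Nat.cast_one, pow_zero]
    rw [abs_of_nonneg (Real.rpow_nonneg (by linarith) _)]
    have := Real.rpow_le_one_of_one_le_of_nonpos (by linarith : (1:ℝ) ≤ 1+v) (by linarith : -a ≤ 0)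
    linarith
  | succ R IH =>
    intro a ha v hv
    set g : ℝ → ℝ := fun t => (1+t) ^ (-a) - Sb a (R+1) t with hg
    set G : ℝ → ℝ := fun t => -a * ((1+t) ^ (-(a+1)) - Sb (a+1) R t) with hG
    have hderiv : ∀ t ∈ Set.uIcc (0:ℝ) v, HasDerivAt g (G t) t := by
      intro t ht
      rw [Set.uIcc_of_le hv] at ht
      have h1t : (0:ℝ) < 1 + t := by linarith [ht.1]
      have hb : HasDerivAt (fun t : ℝ => 1 + t) 1 t := by
        simpa using (hasDerivAt_id t).const_add (1:ℝ)
      have h1 : HasDerivAt (fun t : ℝ => (1+t) ^ (-a)) (-a * (1+t)^(-(a+1))) t := by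
        have := hb.rpow_const (p := -a) (Or.inl h1t.ne')
        convert this using 1
        rw [show -a-1 = -(a+1) by ring]
        ring
      have h2 := hasDerivAt_Sb a R t
      have h3 := h1.sub h2
      refine h3.congr_deriv ?_
      rw [hG]
      ring
    have hGcont : ContinuousOn G (Set.uIcc 0 v) := by
      apply ContinuousOn.mul continuousOn_const
      apply ContinuousOn.sub
      · apply ContinuousOn.rpow_const
        · exact (continuous_const.add continuous_id).continuousOn
        · intro t ht
          rw [Set.uIcc_of_le hv] at ht
          have h1t : (0:ℝ) < 1 + t := by linarith [ht.1]
          exact Or.inl h1t.ne'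
      · apply Continuous.continuousOn
        unfold Sb
        continuity
    have hGint : IntervalIntegrable G volume 0 v := hGcont.intervalIntegrable
    have hFTC : ∫ t in (0:ℝ)..v, G t = g v - g 0 :=
      intervalIntegral.integral_eq_sub_of_hasDerivAt hderiv hGint
    have hg0 : g 0 = 0 := by
      rw [hg]
      simp only [add_zero, Real.one_rpow]
      rw [Sb, Finset.sum_range_succ']
      simp [poch_zero]
    have hRf : ((R.factorial : ℕ) : ℝ) ≠ 0 := by positivity
    have hR1 : ((R:ℝ)+1) ≠ 0 := by positivity
    have hC : (0:ℝ) ≤ poch (a+1) R / R.factorial := by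
      apply div_nonneg (poch_nonneg (by linarith) R) (by positivity)
    have h2 : ‖∫ t in (0:ℝ)..v, G t‖ ≤ |∫ t in (0:ℝ)..v, a * (poch (a+1) R / R.factorial) * t ^ R| := by
      apply intervalIntegral.norm_integral_le_abs_of_norm_le ?_ ?_
      · rw [MeasureTheory.ae_restrict_iff' measurableSet_uIoc]
        refine Filter.Eventually.of_forall fun t ht => ?_
        rw [Set.uIoc_of_le hv] at ht
        have ht0 : (0:ℝ) ≤ t := le_of_lt ht.1
        rw [Real.norm_eq_abs, hG]
        simp only
        rw [abs_mul, abs_neg, abs_of_nonneg ha]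
        have := IH (a+1) (by linarith) t ht0
        calc a * |(1+t) ^ (-(a+1)) - Sb (a+1) R t| ≤ a * (poch (a+1) R / R.factorial * t ^ R) :=
              mul_le_mul_of_nonneg_left this ha
          _ = a * (poch (a+1) R / R.factorial) * t ^ R := by ring
      · apply ContinuousOn.intervalIntegrable
        apply Continuous.continuousOn
        continuity
    have h3 : ∫ t in (0:ℝ)..v, a * (poch (a+1) R / R.factorial) * t ^ R
        = a * (poch (a+1) R / R.factorial) * (v ^ (R+1) / (R+1)) := by
      rw [intervalIntegral.integral_const_mul, integral_pow]
      push_cast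
      ring
    have h4 : |g v| ≤ a * (poch (a+1) R / R.factorial) * (v ^ (R+1) / (R+1)) := by
      have : |g v| = ‖∫ t in (0:ℝ)..v, G t‖ := by rw [hFTC, hg0, sub_zero, Real.norm_eq_abs]
      rw [this, ]
      refine h2.trans (le_of_eq ?_)
      rw [h3]
      rw [abs_of_nonneg]
      positivity
    refine h4.trans (le_of_eq ?_)
    rw [poch_succ', Nat.factorial_succ]
    push_cast
    rw [div_mul_eq_div_div_swap]
    ring


/-- `z_n = (6n-1)!!/(6^{2n}(2n)!)`, the `n`-th coefficient of the partition function of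
zero-dimensional φ³-theory, with `(6n-1)!! = (6n)!/(2^{3n}(3n)!)`. -/
noncomputable def zphi3 (n : ℕ) : ℝ :=
  ((6 * n).factorial : ℝ) / (2 ^ (3 * n) * ((3 * n).factorial : ℝ)) /
    (6 ^ (2 * n) * ((2 * n).factorial : ℝ))

lemma gamma16_56 : Real.Gamma (1/6) * Real.Gamma (5/6) = 2 * Real.pi := by
  have h := Real.Gamma_mul_Gamma_one_sub (1/6)
  rw [show (1:ℝ) - 1/6 = 5/6 by norm_num] at h
  rw [show Real.pi * (1/6) = Real.pi/6 by ring, Real.sin_pi_div_six] at h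
  rw [h]; ring

lemma zphi3_eq (n : ℕ) : zphi3 n
    = (3/2)^n * Real.Gamma (n + 1/6) * Real.Gamma (n + 5/6) / (2 * Real.pi * n.factorial) := by
  induction n with
  | zero =>
    simp only [zphi3, Nat.cast_zero, mul_zero, pow_zero, Nat.factorial_zero, Nat.cast_one,
      zero_add, one_mul]
    rw [gamma16_56]
    norm_num [Real.pi_ne_zero]
  | succ n IH =>
    have h6 : ((6*(n+1)).factorial : ℝ)
        = (6*n+6) * ((6*n+5) * ((6*n+4) * ((6*n+3) * ((6*n+2) * ((6*n+1) * (6*n).factorial))))) := by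
      rw [show 6*(n+1) = (6*n+5)+1 by ring, Nat.factorial_succ,
          show 6*n+5 = (6*n+4)+1 by ring, Nat.factorial_succ,
          show 6*n+4 = (6*n+3)+1 by ring, Nat.factorial_succ,
          show 6*n+3 = (6*n+2)+1 by ring, Nat.factorial_succ,
          show 6*n+2 = (6*n+1)+1 by ring, Nat.factorial_succ,
          show 6*n+1 = (6*n)+1 by ring, Nat.factorial_succ]
      push_cast; ring
    have h3 : ((3*(n+1)).factorial : ℝ) = (3*n+3) * ((3*n+2) * ((3*n+1) * (3*n).factorial)) := by
      rw [show 3*(n+1) = (3*n+2)+1 by ring, Nat.factorial_succ,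
          show 3*n+2 = (3*n+1)+1 by ring, Nat.factorial_succ,
          show 3*n+1 = (3*n)+1 by ring, Nat.factorial_succ]
      push_cast; ring
    have h2 : ((2*(n+1)).factorial : ℝ) = (2*n+2) * ((2*n+1) * (2*n).factorial) := by
      rw [show 2*(n+1) = (2*n+1)+1 by ring, Nat.factorial_succ,
          show 2*n+1 = (2*n)+1 by ring, Nat.factorial_succ]
      push_cast; ring
    have hp2 : ((2:ℝ) ^ (3*(n+1))) = 8 * 2 ^ (3*n) := by
      rw [show 3*(n+1) = 3*n+3 by ring, pow_add]; ring
    have hp6 : ((6:ℝ) ^ (2*(n+1))) = 36 * 6 ^ (2*n) := by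
      rw [show 2*(n+1) = 2*n+2 by ring, pow_add]; ring
    have f2 : ((2:ℝ) ^ (3*n)) ≠ 0 := by positivity
    have f6 : ((6:ℝ) ^ (2*n)) ≠ 0 := by positivity
    have f3n : (((3*n).factorial : ℕ) : ℝ) ≠ 0 := by positivity
    have f2n : (((2*n).factorial : ℕ) : ℝ) ≠ 0 := by positivity
    have fn : ((n.factorial : ℕ) : ℝ) ≠ 0 := by positivity
    have key : zphi3 (n+1) = zphi3 n *
        (((6*n+1)*(6*n+2)*(6*n+3)*(6*n+4)*(6*n+5)*(6*n+6) : ℝ)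
          / (8 * ((3*n+1)*(3*n+2)*(3*n+3)) * 36 * ((2*n+1)*(2*n+2)))) := by
      unfold zphi3
      rw [h6, h3, h2, hp2, hp6]
      push_cast
      field_simp
    have hratio : (((6*n+1)*(6*n+2)*(6*n+3)*(6*n+4)*(6*n+5)*(6*n+6) : ℝ)
          / (8 * ((3*n+1)*(3*n+2)*(3*n+3)) * 36 * ((2*n+1)*(2*n+2))))
        = (3/2) * (n+1/6) * (n+5/6) / (n+1) := by
      have c1 : ((6:ℝ)*n+1) ≠ 0 := by positivity
      have c2 : ((6:ℝ)*n+2) ≠ 0 := by positivity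
      have c3 : ((6:ℝ)*n+3) ≠ 0 := by positivity
      have c4 : ((6:ℝ)*n+4) ≠ 0 := by positivity
      have c5 : ((6:ℝ)*n+5) ≠ 0 := by positivity
      have c6 : ((6:ℝ)*n+6) ≠ 0 := by positivity
      have d1 : ((3:ℝ)*n+1) ≠ 0 := by positivity
      have d2 : ((3:ℝ)*n+2) ≠ 0 := by positivity
      have d3 : ((3:ℝ)*n+3) ≠ 0 := by positivity
      have e1 : ((2:ℝ)*n+1) ≠ 0 := by positivity
      have e2 : ((2:ℝ)*n+2) ≠ 0 := by positivity
      have g1 : ((n:ℝ)+1) ≠ 0 := by positivity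
      field_simp
      ring
    have hg1 : Real.Gamma ((n:ℝ)+1 + 1/6) = ((n:ℝ)+1/6) * Real.Gamma ((n:ℝ)+1/6) := by
      rw [show (n:ℝ)+1+1/6 = ((n:ℝ)+1/6)+1 by ring, Real.Gamma_add_one (by positivity)]
    have hg5 : Real.Gamma ((n:ℝ)+1 + 5/6) = ((n:ℝ)+5/6) * Real.Gamma ((n:ℝ)+5/6) := by
      rw [show (n:ℝ)+1+5/6 = ((n:ℝ)+5/6)+1 by ring, Real.Gamma_add_one (by positivity)]
    rw [key, hratio, IH]
    push_cast
    rw [hg1, hg5, Nat.factorial_succ]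
    push_cast
    have g1 : ((n:ℝ)+1) ≠ 0 := by positivity
    have hpi : (2:ℝ) * Real.pi ≠ 0 := by positivity
    field_simp
    ring


lemma Gamma_add_nat (x : ℝ) (hx : 0 < x) (k : ℕ) :
    Real.Gamma (x + k) = poch x k * Real.Gamma x := by
  induction k with
  | zero => simp [poch_zero]
  | succ k IH =>
    push_cast
    rw [show x + ((k:ℝ)+1) = (x + k) + 1 by ring, Real.Gamma_add_one (by positivity), IH,
      poch_succ]
    ring

lemma core (a : ℝ) (ha0 : 0 < a) (ha1 : a < 1) (R : ℕ) (n : ℕ) (hn : R < n) :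
    |Real.Gamma ((n:ℝ)+a) * Real.Gamma ((n:ℝ)+1-a) / n.factorial
      - ∑ k ∈ Finset.range R,
          (-1:ℝ)^k * (poch a k * poch (1-a) k / k.factorial) * Real.Gamma ((n:ℝ)-k)|
      ≤ poch a R * poch (1-a) R / R.factorial * Real.Gamma ((n:ℝ)-R) := by
  have hnR : (R:ℝ) < (n:ℝ) := by exact_mod_cast hn
  have hn0 : 1 ≤ n := Nat.lt_of_le_of_lt (Nat.zero_le R) hn
  have hn1' : (1:ℝ) ≤ (n:ℝ) := by exact_mod_cast hn0
  have h1a : 0 < 1 - a := by linarith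
  have hna : 0 < (n:ℝ) + a := by positivity
  have hn1a : 0 < (n:ℝ) + 1 - a := by linarith [Nat.cast_nonneg (α := ℝ) n]
  have hG1a : 0 < Real.Gamma (1-a) := Real.Gamma_pos_of_pos h1a
  have hGn1a : 0 < Real.Gamma ((n:ℝ)+1-a) := Real.Gamma_pos_of_pos hn1a
  set e : ℕ → ℝ := fun k => (-1:ℝ)^k * poch a k / k.factorial with he
  set C : ℝ := poch a R / R.factorial with hC
  have hCpos : 0 ≤ C := by
    rw [hC]; apply div_nonneg (poch_nonneg ha0.le R) (by positivity)
  set T : ℕ → ℝ → ℝ := fun k x => x ^ (((k:ℝ)+1-a)-1) * (1-x) ^ (((n:ℝ)-(k:ℝ))-1) with hT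
  set T0 : ℝ → ℝ := fun x => x ^ ((1-a)-1) * (1-x) ^ (((n:ℝ)+a)-1) with hT0
  have hTp : ∀ k : ℕ, (0:ℝ) < (k:ℝ)+1-a := by
    intro k; have : (0:ℝ) ≤ k := Nat.cast_nonneg k; linarith
  have hTkint : ∀ k : ℕ, (k:ℝ) < (n:ℝ) → IntervalIntegrable (T k) volume 0 1 := by
    intro k hk
    exact realBetaIntegrable (hTp k) (by linarith)
  have hT0int : IntervalIntegrable T0 volume 0 1 := realBetaIntegrable h1a hna
  have hkltn : ∀ k ∈ Finset.range R, (k:ℝ) < (n:ℝ) := by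
    intro k hk
    have : (k:ℕ) < R := Finset.mem_range.mp hk
    have : (k:ℝ) < (R:ℝ) := by exact_mod_cast this
    linarith
  have hSumInt : IntervalIntegrable (fun x => ∑ k ∈ Finset.range R, e k * T k x) volume 0 1 := by
    have h := IntervalIntegrable.sum (μ := volume) (a := (0:ℝ)) (b := (1:ℝ))
      (Finset.range R) (f := fun k => fun x => e k * T k x)
      (fun k hk => (hTkint k (hkltn k hk)).const_mul (e k))
    have h2 : (∑ k ∈ Finset.range R, fun x => e k * T k x)
        = fun x => ∑ k ∈ Finset.range R, e k * T k x := by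
      funext x
      simp [Finset.sum_apply]
    rwa [h2] at h
  set f : ℝ → ℝ := fun x => T0 x - ∑ k ∈ Finset.range R, e k * T k x with hf
  have hfint : IntervalIntegrable f volume 0 1 := hT0int.sub hSumInt
  -- value of the integral of f
  have hfval : ∫ x in (0:ℝ)..1, f x
      = Real.Gamma (1-a) * Real.Gamma ((n:ℝ)+a) / Real.Gamma ((n:ℝ)+1)
        - ∑ k ∈ Finset.range R,
            e k * (poch (1-a) k * Real.Gamma (1-a) * Real.Gamma ((n:ℝ)-k)
              / Real.Gamma ((n:ℝ)+1-a)) := by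
    rw [hf]
    rw [intervalIntegral.integral_sub hT0int hSumInt]
    rw [intervalIntegral.integral_finset_sum (fun k hk => (hTkint k (hkltn k hk)).const_mul (e k))]
    congr 1
    · rw [hT0, realBeta h1a hna, show (1-a) + ((n:ℝ)+a) = (n:ℝ)+1 by ring]
    · apply Finset.sum_congr rfl
      intro k hk
      rw [intervalIntegral.integral_const_mul, hT]
      rw [realBeta (hTp k) (by linarith [hkltn k hk])]
      rw [show ((k:ℝ)+1-a) + ((n:ℝ)-(k:ℝ)) = (n:ℝ)+1-a by ring]
      rw [show (k:ℝ)+1-a = (1-a)+(k:ℝ) by ring, Gamma_add_nat (1-a) h1a k]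
  -- pointwise bound
  have hpt : ∀ x ∈ Set.Ioc (0:ℝ) 1, |f x| ≤ C * T R x := by
    intro x hx
    have hx0 : 0 < x := hx.1
    rcases eq_or_lt_of_le hx.2 with hx1 | hx1
    · -- x = 1
      subst hx1
      have z1 : (1:ℝ) - 1 = 0 := by ring
      have hT0z : T0 1 = 0 := by
        simp only [hT0, z1]
        rw [Real.zero_rpow (by linarith : ((n:ℝ)+a)-1 ≠ 0)]
        ring
      have hTkz : ∀ k ∈ Finset.range R, e k * T k 1 = 0 := by
        intro k hk
        have hk' := hkltn k hk
        have hk2 : ((k+1:ℕ):ℝ) < (n:ℝ) := by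
          exact_mod_cast Nat.lt_of_le_of_lt (Nat.succ_le_of_lt (Finset.mem_range.mp hk)) hn
        push_cast at hk2
        simp only [hT, z1]
        rw [Real.zero_rpow (by linarith : ((n:ℝ)-(k:ℝ))-1 ≠ 0)]
        ring
      have hfz : f 1 = 0 := by
        simp only [hf]
        rw [hT0z, Finset.sum_congr rfl hTkz]
        simp
      rw [hfz, abs_zero]
      apply mul_nonneg hCpos
      simp only [hT, z1]
      exact mul_nonneg (Real.rpow_nonneg (by norm_num) _) (Real.rpow_nonneg (le_refl 0) _)
    · -- x < 1
      have h1x : 0 < 1 - x := by linarith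
      set v : ℝ := x / (1-x) with hv
      have hv0 : 0 ≤ v := by positivity
      have key1 : ∀ m : ℕ, (x ^ (-a) * (1-x) ^ ((n:ℝ)-1)) * v ^ m
          = x ^ (((m:ℝ)+1-a)-1) * (1-x) ^ (((n:ℝ)-(m:ℝ))-1) := by
        intro m
        have e1 : x ^ (((m:ℝ)+1-a)-1) = x ^ (-a) * x ^ m := by
          rw [← Real.rpow_natCast x m, ← Real.rpow_add hx0]
          congr 1; ring
        have e2 : (1-x) ^ (((n:ℝ)-(m:ℝ))-1) = (1-x) ^ ((n:ℝ)-1) * ((1-x) ^ m)⁻¹ := by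
          rw [← Real.rpow_natCast (1-x) m, ← Real.rpow_neg h1x.le, ← Real.rpow_add h1x]
          congr 1; ring
        have e3 : v ^ m = x ^ m * ((1-x) ^ m)⁻¹ := by
          rw [hv, div_pow, div_eq_mul_inv]
        rw [e1, e2, e3]; ring
      have e4 : (1+v) ^ (-a) = (1-x) ^ a := by
        have hv1 : 1 + v = (1-x)⁻¹ := by rw [hv]; field_simp; ring
        rw [hv1, Real.inv_rpow h1x.le, Real.rpow_neg h1x.le, inv_inv]
      have key0 : T0 x = (x ^ (-a) * (1-x) ^ ((n:ℝ)-1)) * (1+v) ^ (-a) := by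
        have e5 : x ^ ((1-a)-1) = x ^ (-a) := by congr 1; ring
        have e6 : (1-x) ^ (((n:ℝ)+a)-1) = (1-x) ^ ((n:ℝ)-1) * (1-x) ^ a := by
          rw [← Real.rpow_add h1x]; congr 1; ring
        simp only [hT0]
        rw [e5, e6, e4]; ring
      have hfx : f x = (x ^ (-a) * (1-x) ^ ((n:ℝ)-1)) * ((1+v) ^ (-a) - Sb a R v) := by
        simp only [hf]
        rw [key0, Sb, mul_sub, Finset.mul_sum]
        congr 1
        apply Finset.sum_congr rfl
        intro k hk
        simp only [he, hT]
        rw [← key1 k]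
        ring
      have hW : 0 ≤ x ^ (-a) * (1-x) ^ ((n:ℝ)-1) :=
        mul_nonneg (Real.rpow_nonneg hx0.le _) (Real.rpow_nonneg h1x.le _)
      calc |f x| = (x ^ (-a) * (1-x) ^ ((n:ℝ)-1)) * |(1+v) ^ (-a) - Sb a R v| := by
            rw [hfx, abs_mul, abs_of_nonneg hW]
        _ ≤ (x ^ (-a) * (1-x) ^ ((n:ℝ)-1)) * (poch a R / R.factorial * v ^ R) :=
            mul_le_mul_of_nonneg_left (series_bound R a ha0.le v hv0) hW
        _ = C * ((x ^ (-a) * (1-x) ^ ((n:ℝ)-1)) * v ^ R) := by rw [hC]; ring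
        _ = C * T R x := by rw [key1 R]
  have hTRint : IntervalIntegrable (T R) volume 0 1 := hTkint R hnR
  have hBint : IntervalIntegrable (fun x => C * T R x) volume 0 1 := hTRint.const_mul C
  have hnorm : ‖∫ x in (0:ℝ)..1, f x‖ ≤ |∫ x in (0:ℝ)..1, C * T R x| := by
    apply intervalIntegral.norm_integral_le_abs_of_norm_le ?_ hBint
    rw [MeasureTheory.ae_restrict_iff' measurableSet_uIoc]
    refine Filter.Eventually.of_forall fun t ht => ?_
    rw [Set.uIoc_of_le (by norm_num : (0:ℝ) ≤ 1)] at ht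
    rw [Real.norm_eq_abs]
    exact hpt t ht
  have hBval : ∫ x in (0:ℝ)..1, C * T R x
      = C * (Real.Gamma ((R:ℝ)+1-a) * Real.Gamma ((n:ℝ)-(R:ℝ)) / Real.Gamma ((n:ℝ)+1-a)) := by
    rw [intervalIntegral.integral_const_mul]
    simp only [hT]
    rw [realBeta (hTp R) (by linarith), show ((R:ℝ)+1-a)+((n:ℝ)-(R:ℝ)) = (n:ℝ)+1-a by ring]
  have hGnR : 0 < Real.Gamma ((n:ℝ)-(R:ℝ)) := Real.Gamma_pos_of_pos (by linarith)
  have hGR1a : 0 < Real.Gamma ((R:ℝ)+1-a) := Real.Gamma_pos_of_pos (hTp R)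
  have hfinal : |∫ x in (0:ℝ)..1, f x|
      ≤ C * (Real.Gamma ((R:ℝ)+1-a) * Real.Gamma ((n:ℝ)-(R:ℝ)) / Real.Gamma ((n:ℝ)+1-a)) := by
    have hBabs : |∫ x in (0:ℝ)..1, C * T R x|
        = C * (Real.Gamma ((R:ℝ)+1-a) * Real.Gamma ((n:ℝ)-(R:ℝ)) / Real.Gamma ((n:ℝ)+1-a)) := by
      rw [hBval, abs_of_nonneg]
      apply mul_nonneg hCpos
      positivity
    rw [← hBabs, ← Real.norm_eq_abs]
    exact hnorm
  have hGfact : Real.Gamma ((n:ℝ)+1) = n.factorial := Real.Gamma_nat_eq_factorial n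
  have hGRa : Real.Gamma ((R:ℝ)+1-a) = poch (1-a) R * Real.Gamma (1-a) := by
    rw [show (R:ℝ)+1-a = (1-a)+(R:ℝ) by ring, Gamma_add_nat (1-a) h1a R]
  have hfactn : ((n.factorial : ℕ):ℝ) ≠ 0 := by positivity
  have hD : Real.Gamma ((n:ℝ)+a) * Real.Gamma ((n:ℝ)+1-a) / n.factorial
        - ∑ k ∈ Finset.range R,
            (-1:ℝ)^k * (poch a k * poch (1-a) k / k.factorial) * Real.Gamma ((n:ℝ)-k)
      = (Real.Gamma ((n:ℝ)+1-a)/Real.Gamma (1-a)) * ∫ x in (0:ℝ)..1, f x := by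
    rw [hfval, mul_sub, Finset.mul_sum]
    congr 1
    · rw [hGfact]
      field_simp
    · apply Finset.sum_congr rfl
      intro k hk
      simp only [he]
      have hfk : ((k.factorial : ℕ):ℝ) ≠ 0 := by positivity
      field_simp
  rw [hD, abs_mul, abs_of_nonneg (le_of_lt (div_pos hGn1a hG1a))]
  calc Real.Gamma ((n:ℝ)+1-a)/Real.Gamma (1-a) * |∫ x in (0:ℝ)..1, f x|
      ≤ Real.Gamma ((n:ℝ)+1-a)/Real.Gamma (1-a)
        * (C * (Real.Gamma ((R:ℝ)+1-a) * Real.Gamma ((n:ℝ)-(R:ℝ)) / Real.Gamma ((n:ℝ)+1-a))) :=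
        mul_le_mul_of_nonneg_left hfinal (by positivity)
    _ = poch a R * poch (1-a) R / R.factorial * Real.Gamma ((n:ℝ)-(R:ℝ)) := by
        rw [hGRa, hC]
        field_simp



/-- The complete asymptotic expansion of `z_n` is given by the same sequence with
alternating signs: for every `R`,
`z_n - (1/(2π)) Σ_{k<R} (-1)^k z_k (3/2)^{n-k} Γ(n-k) = O((3/2)^n Γ(n-R))` as `n → ∞`. -/
theorem stmt6 (R : ℕ) :
    (fun n : ℕ => zphi3 n - 1 / (2 * Real.pi) *
        ∑ k ∈ Finset.range R,
          (-1 : ℝ) ^ k * zphi3 k * (3 / 2 : ℝ) ^ ((n : ℤ) - (k : ℤ)) *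
            Real.Gamma ((n : ℝ) - (k : ℝ)))
      =O[Filter.atTop] fun n : ℕ => (3 / 2 : ℝ) ^ n * Real.Gamma ((n : ℝ) - (R : ℝ)) := by
  rw [Asymptotics.isBigO_iff]
  refine ⟨poch (1/6) R * poch (5/6) R / R.factorial / (2*Real.pi), ?_⟩
  rw [Filter.eventually_atTop]
  refine ⟨R+1, fun n hn => ?_⟩
  have hnR : R < n := hn
  have hnRr : (R:ℝ) < (n:ℝ) := by exact_mod_cast hnR
  have hπ : (0:ℝ) < Real.pi := Real.pi_pos
  have hGnR : 0 < Real.Gamma ((n:ℝ)-(R:ℝ)) := Real.Gamma_pos_of_pos (by linarith)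
  have hterm : ∀ k ∈ Finset.range R,
      (-1:ℝ)^k * zphi3 k * (3/2:ℝ)^((n:ℤ)-(k:ℤ)) * Real.Gamma ((n:ℝ)-(k:ℝ))
      = (3/2:ℝ)^n * ((-1:ℝ)^k * (poch (1/6) k * poch (5/6) k / k.factorial)
          * Real.Gamma ((n:ℝ)-(k:ℝ))) := by
    intro k hk
    have hzk : zphi3 k = (3/2:ℝ)^k * (poch (1/6) k * poch (5/6) k / k.factorial) := by
      rw [zphi3_eq k]
      rw [show Real.Gamma ((k:ℝ)+1/6) = poch (1/6) k * Real.Gamma (1/6) by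
        rw [show (k:ℝ)+1/6 = 1/6+(k:ℝ) by ring, Gamma_add_nat (1/6) (by norm_num) k]]
      rw [show Real.Gamma ((k:ℝ)+5/6) = poch (5/6) k * Real.Gamma (5/6) by
        rw [show (k:ℝ)+5/6 = 5/6+(k:ℝ) by ring, Gamma_add_nat (5/6) (by norm_num) k]]
      have hfk : ((k.factorial:ℕ):ℝ) ≠ 0 := by positivity
      have hg : Real.Gamma (1/6) * Real.Gamma (5/6) = 2*Real.pi := gamma16_56
      field_simp
      linear_combination (poch (1/6) k * poch (5/6) k) * hg
    have hzpow : (3/2:ℝ)^((n:ℤ)-(k:ℤ)) = (3/2:ℝ)^n * ((3/2:ℝ)^k)⁻¹ := by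
      rw [zpow_sub₀ (by norm_num : (3/2:ℝ) ≠ 0), zpow_natCast, zpow_natCast, div_eq_mul_inv]
    rw [hzk, hzpow]
    have h32 : ((3:ℝ)/2)^k ≠ 0 := by positivity
    field_simp
  rw [Finset.sum_congr rfl hterm, ← Finset.mul_sum]
  have hmain : zphi3 n - 1/(2*Real.pi) * ((3/2:ℝ)^n
        * ∑ k ∈ Finset.range R, (-1:ℝ)^k * (poch (1/6) k * poch (5/6) k / k.factorial)
            * Real.Gamma ((n:ℝ)-(k:ℝ)))
      = 1/(2*Real.pi) * (3/2:ℝ)^n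
        * (Real.Gamma ((n:ℝ)+1/6) * Real.Gamma ((n:ℝ)+5/6) / n.factorial
          - ∑ k ∈ Finset.range R, (-1:ℝ)^k * (poch (1/6) k * poch (5/6) k / k.factorial)
              * Real.Gamma ((n:ℝ)-(k:ℝ))) := by
    rw [zphi3_eq n]
    ring
  rw [hmain]
  have hcore := core (1/6) (by norm_num) (by norm_num) R n hnR
  rw [show (1:ℝ)-1/6 = 5/6 by norm_num] at hcore
  rw [show (n:ℝ)+1-1/6 = (n:ℝ)+5/6 by ring] at hcore
  have hpow : (0:ℝ) < (3/2:ℝ)^n := by positivity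
  rw [Real.norm_eq_abs, Real.norm_eq_abs, abs_mul, abs_of_nonneg (by positivity :
    (0:ℝ) ≤ 1/(2*Real.pi) * (3/2:ℝ)^n)]
  rw [abs_of_nonneg (by positivity : (0:ℝ) ≤ (3/2:ℝ)^n * Real.Gamma ((n:ℝ)-(R:ℝ)))]
  calc 1/(2*Real.pi) * (3/2:ℝ)^n
        * |Real.Gamma ((n:ℝ)+1/6) * Real.Gamma ((n:ℝ)+5/6) / n.factorial
          - ∑ k ∈ Finset.range R, (-1:ℝ)^k * (poch (1/6) k * poch (5/6) k / k.factorial)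
              * Real.Gamma ((n:ℝ)-(k:ℝ))|
      ≤ 1/(2*Real.pi) * (3/2:ℝ)^n
        * (poch (1/6) R * poch (5/6) R / R.factorial * Real.Gamma ((n:ℝ)-(R:ℝ))) := by
        apply mul_le_mul_of_nonneg_left _ (by positivity)
        convert hcore using 3
    _ = poch (1/6) R * poch (5/6) R / R.factorial / (2*Real.pi)
          * ((3/2:ℝ)^n * Real.Gamma ((n:ℝ)-(R:ℝ))) := by ring
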